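/- For every ε ∈ (0, 1) there exists a symmetric positive semidefinite matrix K ∈ ℝ^{3×3} with the following property. Let C ∈ ℝ^{3×2} consist of the first two columns of K and let W ∈ ℝ^{2×2} be the leading 2×2 principal submatrix of K. Let W_(1) denote a best rank-1 approximation of W (obtained from the top eigenpair of W), and let G^{nys} = C (W_(1))† Cᵀ be the standard rank-1 Nyström approximation; let G^{opt} be a best rank-1 approximation (in Frobenius norm) of the matrix C W† Cᵀ. Then ‖K − G^{nys}‖_F / ‖K‖_F ≥ 1 − ε while ‖K − G^{opt}‖_F / ‖K‖_F ≤ ε. -/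

import Mathlib

open Matrix

/-- Frobenius norm of a real matrix. -/
noncomputable def frobNorm {a b : ℕ} (A : Matrix (Fin a) (Fin b) ℝ) : ℝ :=
  Real.sqrt (∑ i, ∑ j, (A i j) ^ 2)

/-- `Wd` is the Moore–Penrose pseudo-inverse of `W` (the four Penrose conditions). -/
def IsMoorePenrose {a : ℕ} (W Wd : Matrix (Fin a) (Fin a) ℝ) : Prop :=
  W * Wd * W = W ∧ Wd * W * Wd = Wd ∧ (W * Wd)ᵀ = W * Wd ∧ (Wd * W)ᵀ = Wd * W

lemma rank_outer {n m : ℕ} (u : Fin n → ℝ) (v : Fin m → ℝ) :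
    (Matrix.of fun i j => u i * v j : Matrix (Fin n) (Fin m) ℝ).rank ≤ 1 := by
  have h : (Matrix.of fun i j => u i * v j : Matrix (Fin n) (Fin m) ℝ) =
      (Matrix.of fun i (_ : Fin 1) => u i) * (Matrix.of fun (_ : Fin 1) j => v j) := by
    ext i j; simp [Matrix.mul_apply]
  rw [h]
  exact le_trans (Matrix.rank_mul_le_left _ _)
    (by simpa using Matrix.rank_le_card_width (Matrix.of fun i (_ : Fin 1) => u i))

lemma frob2 (A : Matrix (Fin 2) (Fin 2) ℝ) :
    frobNorm A = Real.sqrt ((A 0 0)^2 + (A 0 1)^2 + (A 1 0)^2 + (A 1 1)^2) := by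
  rw [frobNorm]; congr 1; simp [Fin.sum_univ_two]; ring

lemma frob3 (A : Matrix (Fin 3) (Fin 3) ℝ) :
    frobNorm A = Real.sqrt ((A 0 0)^2 + (A 0 1)^2 + (A 0 2)^2 + (A 1 0)^2 + (A 1 1)^2
      + (A 1 2)^2 + (A 2 0)^2 + (A 2 1)^2 + (A 2 2)^2) := by
  rw [frobNorm]; congr 1; simp [Fin.sum_univ_three]; ring

lemma pinv_of_e11 (W1d : Matrix (Fin 2) (Fin 2) ℝ)
    (h : IsMoorePenrose !![(1:ℝ),0;0,0] W1d) : W1d = !![(1:ℝ),0;0,0] := by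
  obtain ⟨h1, h2, h3, h4⟩ := h
  have e1 := congrFun (congrFun h1 0) 0
  have e2 := congrFun (congrFun h3 0) 1
  have e3 := congrFun (congrFun h4 0) 1
  have e4 := congrFun (congrFun h2 1) 1
  simp [Matrix.mul_apply, Matrix.vecMul, dotProduct, Fin.sum_univ_two,
    Matrix.transpose_apply] at e1 e2 e3 e4
  ext i j
  fin_cases i <;> fin_cases j <;> simp <;> nlinarith [e1, e2, e3, e4]

lemma pinv_of_W (Wd : Matrix (Fin 2) (Fin 2) ℝ)
    (h : IsMoorePenrose !![(1:ℝ),0;0,1/2] Wd) : Wd = !![(1:ℝ),0;0,2] := by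
  obtain ⟨h1, -, -, -⟩ := h
  ext i j
  have e := congrFun (congrFun h1 i) j
  fin_cases i <;> fin_cases j <;>
    simp_all [Matrix.mul_apply, Matrix.vecMul, dotProduct, Fin.sum_univ_two] <;>
    linarith

set_option maxHeartbeats 1600000

/-- toy example, Section 4.1: for every `ε ∈ (0, 1)` there is a `3×3` SPSD
matrix `K` such that, taking `C` to be its first two columns and `W` its leading `2×2`
principal submatrix, the standard rank-1 Nyström approximation `C (W_(1))† Cᵀ` has
relative Frobenius error at least `1 − ε`, while any best rank-1 approximation `G^{opt}`
of `C W† Cᵀ` has relative error at most `ε`. -/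
theorem standard_nystrom_can_be_arbitrarily_bad :
    ∀ ε : ℝ, ε ∈ Set.Ioo (0 : ℝ) 1 →
    ∃ K : Matrix (Fin 3) (Fin 3) ℝ, K.PosSemidef ∧
      ∀ C : Matrix (Fin 3) (Fin 2) ℝ,
        (∀ (i : Fin 3) (j : Fin 2), C i j = K i (Fin.castLE (by norm_num) j)) →
      ∀ W : Matrix (Fin 2) (Fin 2) ℝ,
        (∀ i j : Fin 2,
          W i j = K (Fin.castLE (by norm_num) i) (Fin.castLE (by norm_num) j)) →
      -- W₍₁₎ : a best rank-1 approximation of W (from the top eigenpair)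
      ∀ W1 : Matrix (Fin 2) (Fin 2) ℝ, W1.rank ≤ 1 →
        (∀ A : Matrix (Fin 2) (Fin 2) ℝ, A.rank ≤ 1 →
          frobNorm (W - W1) ≤ frobNorm (W - A)) →
      -- its Moore–Penrose pseudo-inverse
      ∀ W1d : Matrix (Fin 2) (Fin 2) ℝ, IsMoorePenrose W1 W1d →
      -- the Moore–Penrose pseudo-inverse of W itself
      ∀ Wd : Matrix (Fin 2) (Fin 2) ℝ, IsMoorePenrose W Wd →
      -- G^{opt} : a best rank-1 approximation of C W† Cᵀ in Frobenius norm
      ∀ Gopt : Matrix (Fin 3) (Fin 3) ℝ, Gopt.rank ≤ 1 →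
        (∀ A : Matrix (Fin 3) (Fin 3) ℝ, A.rank ≤ 1 →
          frobNorm (C * Wd * Cᵀ - Gopt) ≤ frobNorm (C * Wd * Cᵀ - A)) →
      1 - ε ≤ frobNorm (K - C * W1d * Cᵀ) / frobNorm K ∧
        frobNorm (K - Gopt) / frobNorm K ≤ ε := by
  rintro ε ⟨hε0, hε1⟩
  obtain ⟨m, hm⟩ : ∃ m : ℝ, m = 2 / ε := ⟨_, rfl⟩
  have hmε : m * ε = 2 := by rw [hm]; field_simp
  have hm2 : 2 ≤ m := by rw [hm]; rw [le_div_iff₀ hε0]; linarith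
  refine ⟨!![1,0,0; 0,1/2,m/2; 0,m/2,m^2/2], ?_, ?_⟩
  · rw [Matrix.posSemidef_iff_dotProduct_mulVec]
    constructor
    · show _ᴴ = _
      ext i j
      fin_cases i <;> fin_cases j <;>
        simp [Matrix.conjTranspose_apply, Matrix.vecHead, Matrix.vecTail]
    · intro x
      have : star x = x := by simp
      rw [this]
      simp only [dotProduct, Matrix.mulVec, Fin.sum_univ_three]
      simp [Matrix.vecHead, Matrix.vecTail]
      nlinarith [sq_nonneg (x 1 + m * x 2), sq_nonneg (x 0)]
  intro C hC W hW W1 hW1rank hW1opt W1d hW1d Wd hWd Gopt hGoptrank hGoptopt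
  -- identify C and W
  have hCval : C = !![1,0; 0,1/2; 0,m/2] := by
    ext i j
    fin_cases i <;> fin_cases j <;> rw [hC] <;> rfl
  have hWval : W = !![1,0; 0,1/2] := by
    ext i j
    fin_cases i <;> fin_cases j <;> rw [hW] <;> rfl
  subst hCval hWval
  -- identify W1
  have hrank1 : (!![(1:ℝ),0;0,0] : Matrix (Fin 2) (Fin 2) ℝ).rank ≤ 1 := by
    rw [show !![(1:ℝ),0;0,0] = Matrix.of fun i j => (![(1:ℝ),0]) i * (![(1:ℝ),0]) j by
      ext i j; fin_cases i <;> fin_cases j <;> simp]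
    exact rank_outer _ _
  have h1le := hW1opt !![(1:ℝ),0;0,0] hrank1
  have hSle : (1 - W1 0 0)^2 + (0 - W1 0 1)^2 + (0 - W1 1 0)^2 + (1/2 - W1 1 1)^2 ≤ 1/4 := by
    rw [frob2, frob2] at h1le
    have hrhs : ((!![(1:ℝ),0;0,1/2] - !![(1:ℝ),0;0,0]) 0 0)^2
        + ((!![(1:ℝ),0;0,1/2] - !![(1:ℝ),0;0,0]) 0 1)^2
        + ((!![(1:ℝ),0;0,1/2] - !![(1:ℝ),0;0,0]) 1 0)^2
        + ((!![(1:ℝ),0;0,1/2] - !![(1:ℝ),0;0,0]) 1 1)^2 = (1/2)^2 := by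
      norm_num
    rw [hrhs, Real.sqrt_sq (by norm_num : (0:ℝ) ≤ 1/2)] at h1le
    have hgoal : ((!![(1:ℝ),0;0,1/2] - W1) 0 0)^2 + ((!![(1:ℝ),0;0,1/2] - W1) 0 1)^2
        + ((!![(1:ℝ),0;0,1/2] - W1) 1 0)^2 + ((!![(1:ℝ),0;0,1/2] - W1) 1 1)^2
        = (1 - W1 0 0)^2 + (0 - W1 0 1)^2 + (0 - W1 1 0)^2 + (1/2 - W1 1 1)^2 := by
      simp [Matrix.sub_apply]
    rw [hgoal] at h1le
    set S := (1 - W1 0 0)^2 + (0 - W1 0 1)^2 + (0 - W1 1 0)^2 + (1/2 - W1 1 1)^2 with hSdef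
    have hS0 : 0 ≤ S := by positivity
    calc S = Real.sqrt S ^ 2 := (Real.sq_sqrt hS0).symm
    _ ≤ (1/2)^2 := pow_le_pow_left₀ (Real.sqrt_nonneg S) h1le 2
    _ = 1/4 := by norm_num
  have hdet : W1 0 0 * W1 1 1 - W1 0 1 * W1 1 0 = 0 := by
    by_contra hne
    have hu : IsUnit W1.det := by
      rw [Matrix.det_fin_two]
      exact Ne.isUnit hne
    have := Matrix.rank_of_isUnit W1 ((Matrix.isUnit_iff_isUnit_det W1).2 hu)
    rw [this] at hW1rank
    simp at hW1rank
  have hd0 : W1 1 1 = 0 := by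
    have hge : 0 ≤ W1 1 1 := by
      nlinarith [sq_nonneg (1 - W1 0 0), sq_nonneg (W1 0 1), sq_nonneg (W1 1 0),
        sq_nonneg (W1 1 1)]
    have hle : W1 1 1 ≤ 0 := by
      nlinarith [sq_nonneg (W1 0 0 + W1 1 1 - 1), sq_nonneg (W1 0 1 - W1 1 0)]
    linarith
  rw [hd0] at hSle
  have ha1 : W1 0 0 = 1 := by
    have h : (1 - W1 0 0)^2 = 0 := le_antisymm
      (by nlinarith [sq_nonneg (0 - W1 0 1), sq_nonneg (0 - W1 1 0)]) (sq_nonneg _)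
    have := sq_eq_zero_iff.1 h
    linarith
  have hb0 : W1 0 1 = 0 := by
    have h : (0 - W1 0 1)^2 = 0 := le_antisymm
      (by nlinarith [sq_nonneg (1 - W1 0 0), sq_nonneg (0 - W1 1 0)]) (sq_nonneg _)
    have := sq_eq_zero_iff.1 h
    linarith
  have hc0 : W1 1 0 = 0 := by
    have h : (0 - W1 1 0)^2 = 0 := le_antisymm
      (by nlinarith [sq_nonneg (1 - W1 0 0), sq_nonneg (0 - W1 0 1)]) (sq_nonneg _)
    have := sq_eq_zero_iff.1 h
    linarith
  have hW1val : W1 = !![(1:ℝ),0;0,0] := by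
    ext i j
    fin_cases i <;> fin_cases j <;> simp [ha1, hb0, hc0, hd0]
  subst hW1val
  -- identify the pseudo-inverses
  have hW1dval := pinv_of_e11 W1d hW1d
  have hWdval := pinv_of_W Wd hWd
  subst hW1dval hWdval
  clear hC hW hW1d hWd hW1opt hdet hSle hd0 ha1 hb0 hc0 hrank1 hW1rank h1le
  -- products
  have hCt : (!![(1:ℝ),0; 0,1/2; 0,m/2])ᵀ = !![(1:ℝ),0,0; 0,1/2,m/2] := by
    ext i j; fin_cases i <;> fin_cases j <;> rfl
  have hP1 : !![(1:ℝ),0; 0,1/2; 0,m/2] * !![(1:ℝ),0;0,0] * (!![(1:ℝ),0; 0,1/2; 0,m/2])ᵀ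
      = !![(1:ℝ),0,0;0,0,0;0,0,0] := by
    rw [hCt]
    ext i j
    fin_cases i <;> fin_cases j <;>
      simp [Matrix.mul_apply, Fin.sum_univ_two, Matrix.vecHead, Matrix.vecTail]
  have hP2 : !![(1:ℝ),0; 0,1/2; 0,m/2] * !![(1:ℝ),0;0,2] * (!![(1:ℝ),0; 0,1/2; 0,m/2])ᵀ
      = !![1,0,0; 0,1/2,m/2; 0,m/2,m^2/2] := by
    rw [hCt]
    ext i j
    fin_cases i <;> fin_cases j <;>
      simp [Matrix.mul_apply, Fin.sum_univ_two, Matrix.vecHead, Matrix.vecTail] <;> ring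
  rw [hP1]
  rw [hP2] at hGoptopt
  -- the rank-1 competitor for Gopt
  have hBrank : (!![(0:ℝ),0,0; 0,1/2,m/2; 0,m/2,m^2/2] : Matrix (Fin 3) (Fin 3) ℝ).rank ≤ 1 := by
    rw [show !![(0:ℝ),0,0; 0,1/2,m/2; 0,m/2,m^2/2]
        = Matrix.of fun i j => (![(0:ℝ),1,m]) i * (![(0:ℝ),1/2,m/2]) j by
      ext i j; fin_cases i <;> fin_cases j <;> simp [Matrix.vecHead, Matrix.vecTail] <;> ring]
    exact rank_outer _ _
  have hGb : frobNorm (!![(1:ℝ),0,0; 0,1/2,m/2; 0,m/2,m^2/2] - Gopt) ≤ 1 := by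
    have h := hGoptopt !![(0:ℝ),0,0; 0,1/2,m/2; 0,m/2,m^2/2] hBrank
    have hrhs : frobNorm (!![(1:ℝ),0,0; 0,1/2,m/2; 0,m/2,m^2/2]
        - !![(0:ℝ),0,0; 0,1/2,m/2; 0,m/2,m^2/2]) = 1 := by
      rw [frob3]
      norm_num [Matrix.sub_apply, Matrix.vecHead, Matrix.vecTail]
      simp [Matrix.vecHead, Matrix.vecTail]
    rw [hrhs] at h
    exact h
  -- Frobenius norms
  set T : ℝ := (1 + m^2) / 2 with hT
  have hT0 : (0:ℝ) ≤ T := by positivity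
  have hFN1 : frobNorm (!![(1:ℝ),0,0; 0,1/2,m/2; 0,m/2,m^2/2] - !![(1:ℝ),0,0;0,0,0;0,0,0])
      = T := by
    have h0 : !![(1:ℝ),0,0; 0,1/2,m/2; 0,m/2,m^2/2] - !![(1:ℝ),0,0;0,0,0;0,0,0]
        = !![(0:ℝ),0,0; 0,1/2,m/2; 0,m/2,m^2/2] := by
      ext i j
      fin_cases i <;> fin_cases j <;> simp [Matrix.vecHead, Matrix.vecTail]
    rw [h0, frob3]
    have harg : ((!![(0:ℝ),0,0; 0,1/2,m/2; 0,m/2,m^2/2] : Matrix (Fin 3) (Fin 3) ℝ) 0 0)^2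
        + (!![(0:ℝ),0,0; 0,1/2,m/2; 0,m/2,m^2/2] 0 1)^2
        + (!![(0:ℝ),0,0; 0,1/2,m/2; 0,m/2,m^2/2] 0 2)^2
        + (!![(0:ℝ),0,0; 0,1/2,m/2; 0,m/2,m^2/2] 1 0)^2
        + (!![(0:ℝ),0,0; 0,1/2,m/2; 0,m/2,m^2/2] 1 1)^2
        + (!![(0:ℝ),0,0; 0,1/2,m/2; 0,m/2,m^2/2] 1 2)^2
        + (!![(0:ℝ),0,0; 0,1/2,m/2; 0,m/2,m^2/2] 2 0)^2
        + (!![(0:ℝ),0,0; 0,1/2,m/2; 0,m/2,m^2/2] 2 1)^2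
        + (!![(0:ℝ),0,0; 0,1/2,m/2; 0,m/2,m^2/2] 2 2)^2 = T^2 := by
      simp [Matrix.vecHead, Matrix.vecTail]
      rw [hT]; ring
    rw [harg]
    exact Real.sqrt_sq hT0
  have hFNK : frobNorm (!![(1:ℝ),0,0; 0,1/2,m/2; 0,m/2,m^2/2]) = Real.sqrt (1 + T^2) := by
    rw [frob3]
    congr 1
    simp [Matrix.vecHead, Matrix.vecTail]
    rw [hT]; ring
  set N : ℝ := Real.sqrt (1 + T^2) with hN
  have hNpos : 0 < N := Real.sqrt_pos.2 (by positivity)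
  have hN2 : N^2 = 1 + T^2 := Real.sq_sqrt (by positivity)
  have hNT : T ≤ N := by
    calc T = Real.sqrt (T^2) := (Real.sqrt_sq hT0).symm
    _ ≤ Real.sqrt (1 + T^2) := Real.sqrt_le_sqrt (by nlinarith)
    _ = N := hN.symm
  have hTε : 2 ≤ T * ε := by
    have : T * ε = (ε + m * (m * ε)) / 2 := by rw [hT]; ring
    rw [this, hmε]
    linarith
  rw [hFN1, hFNK]
  constructor
  · -- 1 - ε ≤ T / N
    rw [le_div_iff₀ hNpos]
    have h4 : 4 ≤ (T*ε)^2 := by nlinarith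
    have hεnn : (0:ℝ) ≤ ε * (1 - ε) := mul_nonneg (le_of_lt hε0) (by linarith)
    have hsq : (1-ε)^2 * N^2 ≤ T^2 := by
      rw [hN2]
      nlinarith [sq_nonneg T]
    nlinarith [hNpos, hT0, sq_nonneg ((1-ε)*N - T), sq_nonneg ((1-ε)*N + T)]
  · -- frobNorm (K - Gopt) / N ≤ ε
    rw [div_le_iff₀ hNpos]
    have : 1 ≤ ε * N := by nlinarith
    linarith
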